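/- Let λ > 1, α ≥ 0, β > 0. If β(λ-1) > 1, then the equation λ e^{-y(1+αy)} - 1 = y/(β(1 - e^{-y(1+αy)})) has exactly one solution y ∈ (0, y_c), where y_c(1+αy_c) = ln λ. Hence the predator-prey system has a unique interior steady state. -/

import Mathlib

open Real Filter Set

private lemma uiss_alg (lam β v t y w : ℝ) (hβ : 0 < β) (hlam1 : 0 < lam - 1)
    (hR : 1 < β * (lam - 1)) (hv0 : 0 < v) (hv1 : v < 1) (hlv : 1 < lam * v)
    (hc : 0 < 2 * lam * v - lam - 1) (hy0 : 0 < y) (h2tv : 2 * t * v < 1 - v ^ 2)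
    (hwt : w * y = 2 * t - y) (hzero : β * (lam * v - 1) * (1 - v) = y) :
    β * w * v * (2 * lam * v - lam - 1) < 1 := by
  have hA : 0 < (lam * v - 1) * (1 - v) := mul_pos (by linarith) (by linarith)
  have key3 : (lam - 1) * ((2 * lam * v - lam - 1) * (1 - v ^ 2)) ≤
      (lam - 1) * ((lam * v - 1) * (1 - v)) +
        ((lam * v - 1) * (1 - v)) * (v * (2 * lam * v - lam - 1)) := by
    have hid : (lam - 1) * ((lam * v - 1) * (1 - v)) +
        ((lam * v - 1) * (1 - v)) * (v * (2 * lam * v - lam - 1)) -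
        (lam - 1) * ((2 * lam * v - lam - 1) * (1 - v ^ 2)) =
        lam * (1 - v) ^ 3 * (lam * (1 + 2 * v) - 1) := by ring
    have hpos : 0 ≤ lam * (1 - v) ^ 3 * (lam * (1 + 2 * v) - 1) := by
      apply mul_nonneg (mul_nonneg (by linarith) (pow_nonneg (by linarith) 3))
      nlinarith
    linarith
  have hBpos : 0 < β * (2 * lam * v - lam - 1) := by positivity
  have hprod : 0 < β * ((lam * v - 1) * (1 - v)) * (v * (2 * lam * v - lam - 1)) :=
    mul_pos (mul_pos hβ hA) (mul_pos hv0 hc)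
  have F1 : (lam - 1) * (β * (2 * lam * v - lam - 1) * (2 * t * v)) <
      (lam - 1) * (β * (2 * lam * v - lam - 1) * (1 - v ^ 2)) := by
    apply mul_lt_mul_of_pos_left _ hlam1
    exact mul_lt_mul_of_pos_left h2tv hBpos
  have F2 : β * ((lam - 1) * ((2 * lam * v - lam - 1) * (1 - v ^ 2))) ≤
      β * ((lam - 1) * ((lam * v - 1) * (1 - v)) +
        ((lam * v - 1) * (1 - v)) * (v * (2 * lam * v - lam - 1))) :=
    mul_le_mul_of_nonneg_left key3 hβ.le
  have F3 : β * ((lam * v - 1) * (1 - v)) * (v * (2 * lam * v - lam - 1)) * 1 ≤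
      β * ((lam * v - 1) * (1 - v)) * (v * (2 * lam * v - lam - 1)) * (β * (lam - 1)) :=
    mul_le_mul_of_nonneg_left hR.le hprod.le
  have F5 : (lam - 1) * (β * v * (2 * lam * v - lam - 1)) * (β * ((lam * v - 1) * (1 - v))) =
      (lam - 1) * (β * v * (2 * lam * v - lam - 1)) * y := by
    rw [show β * ((lam * v - 1) * (1 - v)) = y by linarith [hzero]]
  have F6 : (lam - 1) * (β * ((lam * v - 1) * (1 - v))) = (lam - 1) * y := by
    rw [show β * ((lam * v - 1) * (1 - v)) = y by linarith [hzero]]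
  rw [← mul_lt_mul_iff_left₀ hy0]
  calc β * w * v * (2 * lam * v - lam - 1) * y
      = β * v * (2 * lam * v - lam - 1) * (w * y) := by ring
    _ = β * v * (2 * lam * v - lam - 1) * (2 * t - y) := by rw [hwt]
    _ < 1 * y := by
        rw [← mul_lt_mul_iff_right₀ hlam1]
        nlinarith [F1, F2, F3, F5, F6]

private lemma uiss_hasDeriv (lam α β : ℝ) (y : ℝ) :
    HasDerivAt (fun y : ℝ => β * (lam * Real.exp (-(y * (1 + α * y))) - 1) *
        (1 - Real.exp (-(y * (1 + α * y)))) - y)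
      (β * (1 + 2 * α * y) * Real.exp (-(y * (1 + α * y))) *
        (2 * lam * Real.exp (-(y * (1 + α * y))) - lam - 1) - 1) y := by
  have hφ : HasDerivAt (fun y : ℝ => -(y * (1 + α * y))) (-(1 + 2 * α * y)) y := by
    have h1 : HasDerivAt (fun y : ℝ => y * (1 + α * y))
        (1 * (1 + α * y) + y * (0 + (0 * y + α * 1))) y :=
      (hasDerivAt_id y).mul ((hasDerivAt_const y (1:ℝ)).add
        (((hasDerivAt_const y α).mul (hasDerivAt_id y))))
    have h2 : HasDerivAt (fun y : ℝ => -(y * (1 + α * y)))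
        (-(1 * (1 + α * y) + y * (0 + (0 * y + α * 1)))) y := h1.neg
    convert h2 using 1
    ring
  have hE : HasDerivAt (fun y : ℝ => Real.exp (-(y * (1 + α * y))))
      (Real.exp (-(y * (1 + α * y))) * -(1 + 2 * α * y)) y := hφ.exp
  have h1 : HasDerivAt (fun y : ℝ => β * (lam * Real.exp (-(y * (1 + α * y))) - 1))
      (β * (lam * (Real.exp (-(y * (1 + α * y))) * -(1 + 2 * α * y)))) y :=
    ((hE.const_mul lam).sub_const 1).const_mul β
  have h2 : HasDerivAt (fun y : ℝ => 1 - Real.exp (-(y * (1 + α * y))))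
      (-(Real.exp (-(y * (1 + α * y))) * -(1 + 2 * α * y))) y := hE.const_sub 1
  have h3 : HasDerivAt (fun y : ℝ => β * (lam * Real.exp (-(y * (1 + α * y))) - 1) *
      (1 - Real.exp (-(y * (1 + α * y)))) - y)
      (β * (lam * (Real.exp (-(y * (1 + α * y))) * -(1 + 2 * α * y))) *
        (1 - Real.exp (-(y * (1 + α * y)))) +
        β * (lam * Real.exp (-(y * (1 + α * y))) - 1) *
          -(Real.exp (-(y * (1 + α * y))) * -(1 + 2 * α * y)) - 1) y :=
    (h1.mul h2).sub (hasDerivAt_id y)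
  convert h3 using 1
  ring

private lemma uiss_deriv_neg (lam α β yc : ℝ) (hlam : 1 < lam) (hα : 0 ≤ α)
    (hβ : 0 < β) (hR : 1 < β * (lam - 1))
    (hyc : 0 < yc) (hyceq : yc * (1 + α * yc) = Real.log lam)
    (y : ℝ) (hy : y ∈ Set.Ioo 0 yc)
    (hz : β * (lam * Real.exp (-(y * (1 + α * y))) - 1) *
        (1 - Real.exp (-(y * (1 + α * y)))) - y = 0) :
    β * (1 + 2 * α * y) * Real.exp (-(y * (1 + α * y))) *
        (2 * lam * Real.exp (-(y * (1 + α * y))) - lam - 1) - 1 < 0 := by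
  obtain ⟨hy0, hyyc⟩ := hy
  set t : ℝ := y * (1 + α * y) with hts
  set v : ℝ := Real.exp (-t) with hvs
  have hv0 : 0 < v := Real.exp_pos _
  have ht0 : 0 < t := by
    rw [hts]; nlinarith [mul_nonneg hα (mul_pos hy0 hy0).le]
  have htL : t < Real.log lam := by
    rw [← hyceq, hts]
    nlinarith [mul_nonneg (mul_nonneg hα (by linarith : (0:ℝ) ≤ yc - y))
      (by linarith : (0:ℝ) ≤ yc + y)]
  have hv1 : v < 1 := Real.exp_lt_one_iff.mpr (by linarith)
  have hlv : 1 < lam * v := by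
    have h1 : Real.exp (-Real.log lam) < v := Real.exp_lt_exp.mpr (by linarith)
    have h2 : Real.exp (-Real.log lam) = lam⁻¹ := by
      rw [Real.exp_neg, Real.exp_log (by linarith)]
    rw [h2] at h1
    calc (1:ℝ) = lam * lam⁻¹ := by field_simp
    _ < lam * v := mul_lt_mul_of_pos_left h1 (by linarith)
  have hzero : β * (lam * v - 1) * (1 - v) = y := by linarith
  rcases le_or_gt (2 * lam * v - lam - 1) 0 with hc | hc
  · have h1 : 0 < β * (1 + 2 * α * y) * v := by
      apply mul_pos (mul_pos hβ (by nlinarith)) hv0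
    nlinarith
  · have hsinh : t < (Real.exp t - Real.exp (-t)) / 2 := by
      have := Real.self_lt_sinh_iff.mpr ht0
      rwa [Real.sinh_eq] at this
    have hvv : Real.exp t * v = 1 := by
      rw [hvs, ← Real.exp_add]; simp
    have h2tv : 2 * t * v < 1 - v ^ 2 := by
      have h := mul_lt_mul_of_pos_right (show 2 * t < Real.exp t - v by
        rw [hvs]; linarith) hv0
      nlinarith [h, hvv]
    have hwt : (1 + 2 * α * y) * y = 2 * t - y := by rw [hts]; ring
    have := uiss_alg lam β v t y (1 + 2 * α * y) hβ (by linarith) hR hv0 hv1 hlv hc hy0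
      h2tv hwt hzero
    linarith


private lemma uiss_ev_right_lt (f : ℝ → ℝ) {x d : ℝ} (hd : HasDerivAt f d x) (h : d < 0) :
    ∀ᶠ y in nhdsWithin x (Set.Ioi x), f y < f x := by
  have ht := hasDerivAt_iff_tendsto_slope.mp hd
  have h1 : ∀ᶠ y in nhdsWithin x {x}ᶜ, slope f x y < 0 := ht.eventually_lt_const h
  have hle : nhdsWithin x (Set.Ioi x) ≤ nhdsWithin x {x}ᶜ :=
    nhdsWithin_mono x (fun y hy => ne_of_gt hy)
  filter_upwards [h1.filter_mono hle, self_mem_nhdsWithin] with z hz hz'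
  have hzx : 0 < z - x := sub_pos.mpr hz'
  rw [slope_def_field] at hz
  have h2 : f z - f x = (f z - f x) / (z - x) * (z - x) :=
    (div_mul_cancel₀ _ (ne_of_gt hzx)).symm
  nlinarith [mul_neg_of_neg_of_pos hz hzx]

private lemma uiss_ev_left_gt (f : ℝ → ℝ) {x d : ℝ} (hd : HasDerivAt f d x) (h : d < 0) :
    ∀ᶠ y in nhdsWithin x (Set.Iio x), f x < f y := by
  have ht := hasDerivAt_iff_tendsto_slope.mp hd
  have h1 : ∀ᶠ y in nhdsWithin x {x}ᶜ, slope f x y < 0 := ht.eventually_lt_const h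
  have hle : nhdsWithin x (Set.Iio x) ≤ nhdsWithin x {x}ᶜ :=
    nhdsWithin_mono x (fun y hy => ne_of_lt hy)
  filter_upwards [h1.filter_mono hle, self_mem_nhdsWithin] with z hz hz'
  have hzx : z - x < 0 := sub_neg.mpr hz'
  rw [slope_def_field] at hz
  have h2 : f z - f x = (f z - f x) / (z - x) * (z - x) :=
    (div_mul_cancel₀ _ (ne_of_lt hzx)).symm
  nlinarith [mul_pos_of_neg_of_neg hz hzx]

private lemma uiss_ev_right_gt (f : ℝ → ℝ) {x d : ℝ} (hd : HasDerivAt f d x) (h : 0 < d) :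
    ∀ᶠ y in nhdsWithin x (Set.Ioi x), f x < f y := by
  have ht := hasDerivAt_iff_tendsto_slope.mp hd
  have h1 : ∀ᶠ y in nhdsWithin x {x}ᶜ, 0 < slope f x y := ht.eventually_const_lt h
  have hle : nhdsWithin x (Set.Ioi x) ≤ nhdsWithin x {x}ᶜ :=
    nhdsWithin_mono x (fun y hy => ne_of_gt hy)
  filter_upwards [h1.filter_mono hle, self_mem_nhdsWithin] with z hz hz'
  have hzx : 0 < z - x := sub_pos.mpr hz'
  rw [slope_def_field] at hz
  have h2 : f z - f x = (f z - f x) / (z - x) * (z - x) :=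
    (div_mul_cancel₀ _ (ne_of_gt hzx)).symm
  nlinarith [mul_pos hz hzx]

theorem unique_interior_steady_state (lam α β yc : ℝ) (hlam : 1 < lam) (hα : 0 ≤ α)
    (hβ : 0 < β) (hR : 1 < β * (lam - 1))
    (hyc : 0 < yc) (hyceq : yc * (1 + α * yc) = Real.log lam) :
    ∃! y : ℝ, y ∈ Set.Ioo 0 yc ∧
      lam * Real.exp (-(y * (1 + α * y))) - 1 =
        y / (β * (1 - Real.exp (-(y * (1 + α * y))))) := by
  have hlam0 : (0:ℝ) < lam := by linarith
  set F : ℝ → ℝ := fun y => β * (lam * Real.exp (-(y * (1 + α * y))) - 1) *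
      (1 - Real.exp (-(y * (1 + α * y)))) - y with hF
  have hFd : ∀ y : ℝ, HasDerivAt F
      (β * (1 + 2 * α * y) * Real.exp (-(y * (1 + α * y))) *
        (2 * lam * Real.exp (-(y * (1 + α * y))) - lam - 1) - 1) y :=
    fun y => uiss_hasDeriv lam α β y
  have hcont : Continuous F := continuous_iff_continuousAt.mpr
    (fun x => (hFd x).continuousAt)
  -- equivalence between the equation and F y = 0
  have hiff : ∀ y ∈ Set.Ioo 0 yc,
      ((lam * Real.exp (-(y * (1 + α * y))) - 1 =
        y / (β * (1 - Real.exp (-(y * (1 + α * y)))))) ↔ F y = 0) := by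
    intro y hy
    have hph : 0 < y * (1 + α * y) := by
      nlinarith [mul_nonneg hα (mul_pos hy.1 hy.1).le, hy.1]
    have hu1 : Real.exp (-(y * (1 + α * y))) < 1 := Real.exp_lt_one_iff.mpr (by linarith)
    have hden : β * (1 - Real.exp (-(y * (1 + α * y)))) ≠ 0 :=
      ne_of_gt (mul_pos hβ (by linarith))
    rw [eq_div_iff hden]
    constructor
    · intro h
      show β * (lam * Real.exp (-(y * (1 + α * y))) - 1) *
        (1 - Real.exp (-(y * (1 + α * y)))) - y = 0
      linear_combination h
    · intro h
      have h' : β * (lam * Real.exp (-(y * (1 + α * y))) - 1) *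
        (1 - Real.exp (-(y * (1 + α * y)))) - y = 0 := h
      linear_combination h'
  -- value at 0 and yc
  have hF0 : F 0 = 0 := by
    show β * (lam * Real.exp (-(0 * (1 + α * 0))) - 1) *
      (1 - Real.exp (-(0 * (1 + α * 0)))) - 0 = 0
    norm_num
  have hFyc : F yc = -yc := by
    show β * (lam * Real.exp (-(yc * (1 + α * yc))) - 1) *
      (1 - Real.exp (-(yc * (1 + α * yc)))) - yc = -yc
    rw [hyceq, Real.exp_neg, Real.exp_log hlam0]
    have h1 : lam * lam⁻¹ = 1 := mul_inv_cancel₀ (ne_of_gt hlam0)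
    rw [h1]; ring
  -- derivative at 0 is positive
  have hd0 : HasDerivAt F (β * (lam - 1) - 1) 0 := by
    have h := hFd 0
    have h2 : β * (1 + 2 * α * 0) * Real.exp (-(0 * (1 + α * 0))) *
        (2 * lam * Real.exp (-(0 * (1 + α * 0))) - lam - 1) - 1 = β * (lam - 1) - 1 := by
      rw [show -(0 * (1 + α * 0)) = (0:ℝ) by ring, Real.exp_zero]; ring
    rwa [h2] at h
  -- existence of a positive point in (0, yc)
  have hev : ∀ᶠ y in nhdsWithin (0:ℝ) (Set.Ioi 0), F 0 < F y :=
    uiss_ev_right_gt F hd0 (by linarith)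
  have hmem : Set.Ioo (0:ℝ) yc ∈ nhdsWithin (0:ℝ) (Set.Ioi 0) :=
    Ioo_mem_nhdsGT_of_mem ⟨le_refl 0, hyc⟩
  obtain ⟨y0, hy0pos, hy0mem⟩ := (hev.and (eventually_of_mem hmem (fun _ h => h))).exists
  rw [hF0] at hy0pos
  -- existence of a zero via IVT
  have hivt : (0:ℝ) ∈ Set.Ioo (F yc) (F y0) := ⟨by rw [hFyc]; linarith [hy0mem.1], hy0pos⟩
  have himg := intermediate_value_Ioo' (le_of_lt hy0mem.2) hcont.continuousOn hivt
  obtain ⟨z, hzmem, hz0⟩ := himg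
  have hzIoo : z ∈ Set.Ioo 0 yc := ⟨lt_trans hy0mem.1 hzmem.1, hzmem.2⟩
  -- no two distinct zeros
  have hkey : ∀ y1 ∈ Set.Ioo 0 yc, ∀ y2 ∈ Set.Ioo 0 yc,
      F y1 = 0 → F y2 = 0 → y1 < y2 → False := by
    intro y1 hy1 y2 hy2 hz1 hz2 hlt
    have hd2neg := uiss_deriv_neg lam α β yc hlam hα hβ hR hyc hyceq y2 hy2 hz2
    have hd1neg := uiss_deriv_neg lam α β yc hlam hα hβ hR hyc hyceq y1 hy1 hz1
    -- point c in (y1, y2) with F c > 0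
    have hevc : ∀ᶠ y in nhdsWithin y2 (Set.Iio y2), F y2 < F y :=
      uiss_ev_left_gt F (hFd y2) hd2neg
    have hmemc : Set.Ioo y1 y2 ∈ nhdsWithin y2 (Set.Iio y2) :=
      Ioo_mem_nhdsLT_of_mem ⟨hlt, le_refl y2⟩
    obtain ⟨c, hcgt, hcmem⟩ := (hevc.and (eventually_of_mem hmemc (fun _ h => h))).exists
    rw [hz2] at hcgt
    -- point a in (y1, c) with F a < 0
    have heva : ∀ᶠ y in nhdsWithin y1 (Set.Ioi y1), F y < F y1 :=
      uiss_ev_right_lt F (hFd y1) hd1neg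
    have hmema : Set.Ioo y1 c ∈ nhdsWithin y1 (Set.Ioi y1) :=
      Ioo_mem_nhdsGT_of_mem ⟨le_refl y1, hcmem.1⟩
    obtain ⟨a, halt, hamem⟩ := (heva.and (eventually_of_mem hmema (fun _ h => h))).exists
    rw [hz1] at halt
    -- the zero set on [a, c]
    set Z : Set ℝ := Set.Icc a c ∩ F ⁻¹' {0} with hZ
    have hZcpt : IsCompact Z := isCompact_Icc.inter_right
      (isClosed_singleton.preimage hcont)
    have hZne : Z.Nonempty := by
      have h0m : (0:ℝ) ∈ Set.Icc (F a) (F c) := ⟨le_of_lt halt, le_of_lt hcgt⟩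
      obtain ⟨s, hs1, hs2⟩ := intermediate_value_Icc (le_of_lt hamem.2) hcont.continuousOn h0m
      exact ⟨s, hs1, hs2⟩
    have hsup := hZcpt.sSup_mem hZne
    set s := sSup Z with hs
    obtain ⟨⟨has, hsc⟩, hsz⟩ := hsup
    have hsz' : F s = 0 := hsz
    have hslt : s < c := lt_of_le_of_ne hsc (by intro h; rw [h] at hsz'; linarith)
    have hsIoo : s ∈ Set.Ioo 0 yc :=
      ⟨by linarith [hy1.1, hamem.1], by linarith [hcmem.2, hy2.2]⟩
    have hdsneg := uiss_deriv_neg lam α β yc hlam hα hβ hR hyc hyceq s hsIoo hsz'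
    -- point b in (s, c) with F b < 0
    have hevb : ∀ᶠ y in nhdsWithin s (Set.Ioi s), F y < F s :=
      uiss_ev_right_lt F (hFd s) hdsneg
    have hmemb : Set.Ioo s c ∈ nhdsWithin s (Set.Ioi s) :=
      Ioo_mem_nhdsGT_of_mem ⟨le_refl s, hslt⟩
    obtain ⟨b, hblt, hbmem⟩ := (hevb.and (eventually_of_mem hmemb (fun _ h => h))).exists
    rw [hsz'] at hblt
    -- IVT on [b, c] gives a zero above s, contradiction
    have h0m : (0:ℝ) ∈ Set.Icc (F b) (F c) := ⟨le_of_lt hblt, le_of_lt hcgt⟩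
    obtain ⟨z', hz'1, hz'2⟩ := intermediate_value_Icc (le_of_lt hbmem.2) hcont.continuousOn h0m
    have hz'Z : z' ∈ Z := ⟨⟨le_trans has (le_trans (le_of_lt hbmem.1) hz'1.1), hz'1.2⟩, hz'2⟩
    have : z' ≤ s := le_csSup hZcpt.bddAbove hz'Z
    have : s < z' := lt_of_lt_of_le hbmem.1 hz'1.1
    linarith
  -- conclusion
  refine ⟨z, ⟨hzIoo, (hiff z hzIoo).mpr hz0⟩, ?_⟩
  intro y hy
  have hyz : F y = 0 := (hiff y hy.1).mp hy.2
  rcases lt_trichotomy y z with h | h | h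
  · exact absurd (hkey y hy.1 z hzIoo hyz hz0 h) (fun h => h)
  · exact h
  · exact absurd (hkey z hzIoo y hy.1 hz0 hyz h) (fun h => h)
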